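/- Let r > 0 and let H be a complex Hilbert space of holomorphic functions on the disc D_r = {z ∈ ℂ : |z| < r} containing all complex polynomials, such that a holomorphic function h on D_r belongs to H if and only if zh belongs to H, and such that the operator M_z of multiplication by z is bounded on H. Let f, g ∈ H with M_z* g = 0, f(0) ≠ 0 and ⟨f,g⟩ ≠ 0. If there exists h0 ∈ H whose Taylor coefficients at 0 are given by ĥ0(j) = ∑_{i=0}^j f̂(j−i)/⟨f,g⟩^i for all j ≥ 0 (where f̂(n) is the n-th Taylor coefficient of f at 0), then (M_z + f⊗g) h0 = ⟨f,g⟩ h0 and ⟨f,g⟩ is a simple eigenvalue of M_z + f⊗g, i.e., an eigenvalue whose eigenspace is one-dimensional. -/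

import Mathlib

open scoped InnerProductSpace

/-- The rank one operator `f ⊗ g` given by `(f ⊗ g) h = ⟨h, g⟩ f`, where the inner
product is linear in the first argument (i.e. `⟪g, h⟫_ℂ • f` in Mathlib's convention). -/
noncomputable def rankOne {H : Type*} [NormedAddCommGroup H] [InnerProductSpace ℂ H]
    (f g : H) : H →L[ℂ] H := (innerSL ℂ g).smulRight f

/-- The `n`-th Taylor coefficient at `0` of a function `φ : ℂ → ℂ`. -/
noncomputable def taylorCoeff (φ : ℂ → ℂ) (n : ℕ) : ℂ :=
  iteratedDeriv n φ 0 / (n.factorial : ℂ)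

/-- A realization of a complex Hilbert space `H` as a Hilbert space of holomorphic
functions on the disc `D_r = {z : |z| < r}` containing all complex polynomials, such
that a holomorphic function `h` on `D_r` belongs to `H` iff `z·h` does, and the
operator `M_z` of multiplication by `z` is a bounded operator on `H`. -/
structure HolomorphicHilbertSpaceOn (r : ℝ) (H : Type*) [NormedAddCommGroup H]
    [InnerProductSpace ℂ H] [CompleteSpace H] where
  rpos : 0 < r
  toFun : H →ₗ[ℂ] (ℂ → ℂ)
  holo : ∀ h : H, DifferentiableOn ℂ (toFun h) (Metric.ball (0 : ℂ) r)
  sep : ∀ h₁ h₂ : H, Set.EqOn (toFun h₁) (toFun h₂) (Metric.ball (0 : ℂ) r) → h₁ = h₂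
  Mz : H →L[ℂ] H
  Mz_apply : ∀ h : H, ∀ z ∈ Metric.ball (0 : ℂ) r, toFun (Mz h) z = z * toFun h z
  shift_mem : ∀ φ : ℂ → ℂ, DifferentiableOn ℂ φ (Metric.ball (0 : ℂ) r) →
    ((∃ h : H, Set.EqOn (toFun h) φ (Metric.ball (0 : ℂ) r)) ↔
      (∃ h : H, Set.EqOn (toFun h) (fun z => z * φ z) (Metric.ball (0 : ℂ) r)))
  poly_mem : ∀ p : Polynomial ℂ, ∃ h : H,
    Set.EqOn (toFun h) (fun z => Polynomial.eval z p) (Metric.ball (0 : ℂ) r)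

/-! Auxiliary lemmas -/

lemma taylorCoeff_eq_coeff {φ : ℂ → ℂ} {p : FormalMultilinearSeries ℂ ℂ ℂ}
    (hp : HasFPowerSeriesAt φ p 0) (n : ℕ) : taylorCoeff φ n = p.coeff n := by
  obtain ⟨R, hR⟩ := hp
  have h1 := hR.factorial_smul (1 : ℂ) n
  rw [taylorCoeff, iteratedDeriv_eq_iteratedFDeriv, ← h1]
  have : (n.factorial : ℂ) ≠ 0 := Nat.cast_ne_zero.mpr n.factorial_ne_zero
  rw [nsmul_eq_mul, mul_div_cancel_left₀ _ this]
  rfl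

lemma taylorCoeff_eq_of_hasSum {φ : ℂ → ℂ} {c : ℕ → ℂ}
    (h : ∀ᶠ z in nhds (0:ℂ), HasSum (fun n => c n * z ^ n) (φ z)) (n : ℕ) :
    taylorCoeff φ n = c n := by
  have hc : ∀ n, (FormalMultilinearSeries.ofScalars ℂ c).coeff n = c n := by
    intro n
    simp [FormalMultilinearSeries.coeff, FormalMultilinearSeries.ofScalars, List.prod_ofFn]
  have hp : HasFPowerSeriesAt φ (FormalMultilinearSeries.ofScalars ℂ c) 0 := by
    rw [hasFPowerSeriesAt_iff]
    filter_upwards [h] with z hz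
    simpa [hc, smul_eq_mul, mul_comm] using hz
  rw [taylorCoeff_eq_coeff hp, hc]

lemma eventually_hasSum_taylorCoeff {φ : ℂ → ℂ} (h : AnalyticAt ℂ φ 0) :
    ∀ᶠ z in nhds (0:ℂ), HasSum (fun n => taylorCoeff φ n * z ^ n) (φ z) := by
  obtain ⟨p, hp⟩ := h
  filter_upwards [hasFPowerSeriesAt_iff.mp hp] with z hz
  simpa [taylorCoeff_eq_coeff hp, smul_eq_mul, mul_comm] using hz

lemma eqOn_of_taylorCoeff_eq {r : ℝ} (hr : 0 < r) {φ ψ : ℂ → ℂ}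
    (hφ : DifferentiableOn ℂ φ (Metric.ball 0 r)) (hψ : DifferentiableOn ℂ ψ (Metric.ball 0 r))
    (h : ∀ n, taylorCoeff φ n = taylorCoeff ψ n) :
    Set.EqOn φ ψ (Metric.ball (0:ℂ) r) := by
  have h0m : (0:ℂ) ∈ Metric.ball (0:ℂ) r := by simpa using hr
  have aφ := hφ.analyticOnNhd Metric.isOpen_ball
  have aψ := hψ.analyticOnNhd Metric.isOpen_ball
  have heq : φ =ᶠ[nhds (0:ℂ)] ψ := by
    filter_upwards [eventually_hasSum_taylorCoeff (aφ 0 h0m),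
      eventually_hasSum_taylorCoeff (aψ 0 h0m)] with z h1 h2
    have hc : (fun n => taylorCoeff φ n * z ^ n) = fun n => taylorCoeff ψ n * z ^ n := by
      funext n; rw [h n]
    rw [hc] at h1
    exact h1.unique h2
  exact aφ.eqOn_of_preconnected_of_eventuallyEq aψ (convex_ball (0:ℂ) r).isPreconnected h0m heq

/-- shifted coefficient sequence -/
def shiftCoeff (c : ℕ → ℂ) : ℕ → ℂ
  | 0 => 0
  | (n+1) => c n

theorem simple_eigenvalue_rankOne_perturbation
    {r : ℝ} {H : Type*} [NormedAddCommGroup H] [InnerProductSpace ℂ H] [CompleteSpace H]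
    (e : HolomorphicHilbertSpaceOn r H) (f g : H)
    (hg : ContinuousLinearMap.adjoint e.Mz g = 0)
    (hf0 : e.toFun f 0 ≠ 0) (hfg : ⟪g, f⟫_ℂ ≠ 0)
    (h0 : H)
    (hh0 : ∀ j : ℕ, taylorCoeff (e.toFun h0) j =
      ∑ i ∈ Finset.range (j + 1), taylorCoeff (e.toFun f) (j - i) / ⟪g, f⟫_ℂ ^ i) :
    (e.Mz + rankOne f g) h0 = ⟪g, f⟫_ℂ • h0 ∧
    h0 ≠ 0 ∧
    Module.rank ℂ
      (LinearMap.ker ((e.Mz + rankOne f g - ⟪g, f⟫_ℂ • (1 : H →L[ℂ] H) : H →L[ℂ] H) : H →ₗ[ℂ] H)) = 1 := by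
  have h0m : (0:ℂ) ∈ Metric.ball (0:ℂ) r := by simpa using e.rpos
  have anal : ∀ k : H, AnalyticAt ℂ (e.toFun k) 0 :=
    fun k => ((e.holo k).analyticOnNhd Metric.isOpen_ball) 0 h0m
  -- coefficient recursion for h0
  have hu0 : taylorCoeff (e.toFun h0) 0 = taylorCoeff (e.toFun f) 0 := by
    simpa using hh0 0
  have hus : ∀ j, taylorCoeff (e.toFun h0) (j+1) =
      taylorCoeff (e.toFun h0) j / ⟪g, f⟫_ℂ + taylorCoeff (e.toFun f) (j+1) := by
    intro j
    rw [hh0 (j+1), hh0 j, Finset.sum_range_succ', Finset.sum_div]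
    congr 1
    · exact Finset.sum_congr rfl fun i _ => by rw [Nat.succ_sub_succ, pow_succ, div_div]
    · simp
  -- linearity of Taylor coefficients
  have hlin : ∀ (a b : ℂ) (x y : H) (n : ℕ),
      taylorCoeff (e.toFun (a • x + b • y)) n =
        a * taylorCoeff (e.toFun x) n + b * taylorCoeff (e.toFun y) n := by
    intro a b x y n
    apply taylorCoeff_eq_of_hasSum
      (c := fun n => a * taylorCoeff (e.toFun x) n + b * taylorCoeff (e.toFun y) n)
    filter_upwards [eventually_hasSum_taylorCoeff (anal x),
      eventually_hasSum_taylorCoeff (anal y)] with z hx hy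
    have h2 := (hx.mul_left a).add (hy.mul_left b)
    have e1 : (fun n => (a * taylorCoeff (e.toFun x) n + b * taylorCoeff (e.toFun y) n) * z ^ n)
        = fun n => a * (taylorCoeff (e.toFun x) n * z ^ n)
            + b * (taylorCoeff (e.toFun y) n * z ^ n) := by
      funext m; ring
    have e2 : e.toFun (a • x + b • y) z = a * e.toFun x z + b * e.toFun y z := by
      simp [map_add, map_smul]
    rw [e1, e2]
    exact h2
  have hsmul : ∀ (c : ℂ) (x : H) (n : ℕ),
      taylorCoeff (e.toFun (c • x)) n = c * taylorCoeff (e.toFun x) n := by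
    intro c x n
    have := hlin c 0 x x n
    simpa using this
  -- Taylor coefficients of Mz k
  have hMzc : ∀ (k : H) (n : ℕ),
      taylorCoeff (e.toFun (e.Mz k)) n = shiftCoeff (taylorCoeff (e.toFun k)) n := by
    intro k
    apply taylorCoeff_eq_of_hasSum
    filter_upwards [eventually_hasSum_taylorCoeff (anal k),
      Metric.isOpen_ball.mem_nhds h0m] with z hz hzb
    rw [e.Mz_apply k z hzb]
    have h1 := hz.mul_left z
    have h2 : HasSum (fun n => shiftCoeff (taylorCoeff (e.toFun k)) (n + 1) * z ^ (n + 1))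
        (z * e.toFun k z) := by
      have hc : (fun n => shiftCoeff (taylorCoeff (e.toFun k)) (n + 1) * z ^ (n + 1))
          = fun n => z * (taylorCoeff (e.toFun k) n * z ^ n) := by
        funext n; simp only [shiftCoeff]; ring
      rw [hc]; exact h1
    have h3 := (hasSum_nat_add_iff
      (f := fun m => shiftCoeff (taylorCoeff (e.toFun k)) m * z ^ m) 1).mp h2
    simpa [shiftCoeff] using h3
  -- identity principle on H
  have helem : ∀ x y : H,
      (∀ n, taylorCoeff (e.toFun x) n = taylorCoeff (e.toFun y) n) → x = y := by
    intro x y h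
    exact e.sep x y (eqOn_of_taylorCoeff_eq e.rpos (e.holo x) (e.holo y) h)
  -- the functional equation for h0
  have hMzh0 : e.Mz h0 = ⟪g, f⟫_ℂ • h0 - ⟪g, f⟫_ℂ • f := by
    apply helem
    intro n
    have hrw : ⟪g, f⟫_ℂ • h0 + (-⟪g, f⟫_ℂ) • f = ⟪g, f⟫_ℂ • h0 - ⟪g, f⟫_ℂ • f := by
      rw [neg_smul, ← sub_eq_add_neg]
    have hr := hlin ⟪g, f⟫_ℂ (-⟪g, f⟫_ℂ) h0 f n
    rw [hrw] at hr
    rw [hMzc h0 n, hr]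
    cases n with
    | zero =>
      simp only [shiftCoeff, hu0]
      ring
    | succ m =>
      simp only [shiftCoeff]
      rw [hus m]
      field_simp
      ring
  -- inner products
  have hgMz : ⟪g, e.Mz h0⟫_ℂ = 0 := by
    rw [← ContinuousLinearMap.adjoint_inner_left, hg, inner_zero_left]
  have hgh0 : ⟪g, h0⟫_ℂ = ⟪g, f⟫_ℂ := by
    have h2 : ⟪g, e.Mz h0⟫_ℂ = ⟪g, f⟫_ℂ * ⟪g, h0⟫_ℂ - ⟪g, f⟫_ℂ * ⟪g, f⟫_ℂ := by
      rw [hMzh0, inner_sub_right, inner_smul_right, inner_smul_right]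
    rw [hgMz] at h2
    have h3 : ⟪g, f⟫_ℂ * ⟪g, h0⟫_ℂ = ⟪g, f⟫_ℂ * ⟪g, f⟫_ℂ := by linear_combination -h2
    exact mul_left_cancel₀ hfg h3
  -- the eigenvalue equation
  have heig : (e.Mz + rankOne f g) h0 = ⟪g, f⟫_ℂ • h0 := by
    have hr1 : rankOne f g h0 = ⟪g, h0⟫_ℂ • f := by
      simp [rankOne]
    rw [ContinuousLinearMap.add_apply, hr1, hgh0, hMzh0]
    abel
  -- h0 ≠ 0
  have hne : h0 ≠ 0 := by
    intro h00
    have h1 : taylorCoeff (e.toFun h0) 0 = 0 := by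
      rw [h00]
      simp [taylorCoeff, map_zero]
    have h2 : taylorCoeff (e.toFun f) 0 = e.toFun f 0 := by
      simp [taylorCoeff]
    rw [hu0, h2] at h1
    exact hf0 h1
  refine ⟨heig, hne, ?_⟩
  rw [rank_submodule_eq_one_iff]
  refine ⟨h0, ?_, hne, ?_⟩
  · rw [LinearMap.mem_ker, ContinuousLinearMap.coe_coe, ContinuousLinearMap.sub_apply, heig,
      ContinuousLinearMap.smul_apply, ContinuousLinearMap.one_apply, sub_self]
  · intro k hk
    rw [LinearMap.mem_ker] at hk
    have hk' : e.Mz k = ⟪g, f⟫_ℂ • k - ⟪g, k⟫_ℂ • f := by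
      have h1 : e.Mz k + ⟪g, k⟫_ℂ • f - ⟪g, f⟫_ℂ • k = 0 := by
        simpa [rankOne, ContinuousLinearMap.sub_apply, ContinuousLinearMap.add_apply,
          ContinuousLinearMap.smul_apply, ContinuousLinearMap.one_apply] using hk
      have h2 : e.Mz k + ⟪g, k⟫_ℂ • f = ⟪g, f⟫_ℂ • k := sub_eq_zero.mp h1
      exact eq_sub_of_add_eq h2
    have hco : ∀ n, shiftCoeff (taylorCoeff (e.toFun k)) n =
        ⟪g, f⟫_ℂ * taylorCoeff (e.toFun k) n + (-⟪g, k⟫_ℂ) * taylorCoeff (e.toFun f) n := by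
      intro n
      have haf : ⟪g, f⟫_ℂ • k + (-⟪g, k⟫_ℂ) • f = ⟪g, f⟫_ℂ • k - ⟪g, k⟫_ℂ • f := by
        rw [neg_smul, ← sub_eq_add_neg]
      rw [← hMzc k n, ← hlin ⟪g, f⟫_ℂ (-⟪g, k⟫_ℂ) k f n, haf, ← hk']
    have hind : ∀ n, taylorCoeff (e.toFun k) n =
        (⟪g, k⟫_ℂ / ⟪g, f⟫_ℂ) * taylorCoeff (e.toFun h0) n := by
      intro n
      induction n with
      | zero =>
        have h1 := hco 0
        simp only [shiftCoeff] at h1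
        rw [hu0]
        field_simp
        linear_combination -h1
      | succ m ih =>
        have h1 := hco (m+1)
        simp only [shiftCoeff] at h1
        apply mul_left_cancel₀ hfg
        calc ⟪g, f⟫_ℂ * taylorCoeff (e.toFun k) (m+1)
            = taylorCoeff (e.toFun k) m + ⟪g, k⟫_ℂ * taylorCoeff (e.toFun f) (m+1) := by
              linear_combination -h1
          _ = (⟪g, k⟫_ℂ / ⟪g, f⟫_ℂ) * taylorCoeff (e.toFun h0) m
                + ⟪g, k⟫_ℂ * taylorCoeff (e.toFun f) (m+1) := by rw [ih]
          _ = ⟪g, f⟫_ℂ * ((⟪g, k⟫_ℂ / ⟪g, f⟫_ℂ) * taylorCoeff (e.toFun h0) (m+1)) := by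
              rw [hus m]
              field_simp
    have hk2 : k = (⟪g, k⟫_ℂ / ⟪g, f⟫_ℂ) • h0 := by
      apply helem
      intro n
      rw [hind n, hsmul]
    rw [hk2]
    exact Submodule.smul_mem _ _ (Submodule.mem_span_singleton_self h0)
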